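/- Let (X,d) be a complete metric space, R a binary relation on X, p a w-distance on X with respect to R, and T : X → X such that: (i) there exists x₀ with (x₀, T x₀) ∈ R; (ii) R is T-closed; (iii) R is d-self-closed; (iv) there is λ ∈ [0,1) with p(Tx, Ty) ≤ λ p(x,y) whenever (x,y) ∈ R. Then T has a fixed point. -/

import Mathlib

theorem relational_banach_wdist_dselfclosed {X : Type*} [MetricSpace X] [CompleteSpace X]
    (R : X → X → Prop)
    (p : X → X → ℝ) (hp0 : ∀ x y, 0 ≤ p x y)
    (hw1 : ∀ x y z, p x z ≤ p x y + p y z)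
    (hw2 : ∀ (x : X) (u : ℕ → X) (l : X), (∀ n, R (u n) (u (n + 1))) →
      Filter.Tendsto u Filter.atTop (nhds l) →
      p x l ≤ Filter.liminf (fun n => p x (u n)) Filter.atTop)
    (hw3 : ∀ ε > (0:ℝ), ∃ δ > (0:ℝ), ∀ x y z : X, p z x ≤ δ → p z y ≤ δ → dist x y ≤ ε)
    (T : X → X) (x₀ : X) (hx₀ : R x₀ (T x₀))
    (hTc : ∀ x y, R x y → R (T x) (T y))
    (hdsc : ∀ (u : ℕ → X) (x : X), (∀ n, R (u n) (u (n + 1))) →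
      Filter.Tendsto u Filter.atTop (nhds x) →
      ∃ φ : ℕ → ℕ, StrictMono φ ∧ ∀ k, R (u (φ k)) x)
    (lam : ℝ) (hlam0 : 0 ≤ lam) (hlam1 : lam < 1)
    (hcontr : ∀ x y, R x y → p (T x) (T y) ≤ lam * p x y) :
    ∃ x : X, T x = x := by
  set u : ℕ → X := fun n => T^[n] x₀ with hu
  have husucc : ∀ n, u (n + 1) = T (u n) := fun n => Function.iterate_succ_apply' T n x₀
  have hR : ∀ n, R (u n) (u (n + 1)) := by
    intro n
    induction n with
    | zero => simpa [hu] using hx₀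
    | succ n ih =>
      have h := hTc _ _ ih
      rwa [← husucc n, ← husucc (n+1)] at h
  set P : ℝ := p (u 0) (u 1) with hP
  have hPnn : 0 ≤ P := hp0 _ _
  have h1lam : 0 < 1 - lam := by linarith
  set C : ℝ := P / (1 - lam) with hC
  have hCnn : 0 ≤ C := div_nonneg hPnn h1lam.le
  have hPC : P ≤ C := by
    rw [hC, le_div_iff₀ h1lam]
    nlinarith [mul_nonneg hPnn hlam0]
  -- p (u n) (u (n+1)) ≤ lam^n * P
  have hstep : ∀ n, p (u n) (u (n + 1)) ≤ lam ^ n * P := by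
    intro n
    induction n with
    | zero => simp [hP]
    | succ n ih =>
      have h := hcontr _ _ (hR n)
      rw [← husucc n, ← husucc (n+1)] at h
      calc p (u (n+1)) (u (n+1+1)) ≤ lam * p (u n) (u (n+1)) := h
        _ ≤ lam * (lam ^ n * P) := by nlinarith
        _ = lam ^ (n+1) * P := by ring
  -- p (u n) (u (n+m+1)) ≤ lam^n * C
  have hgeo : ∀ m n, p (u n) (u (n + m + 1)) ≤ lam ^ n * C := by
    intro m
    induction m with
    | zero =>
      intro n
      have := hstep n
      have hln : (0:ℝ) ≤ lam ^ n := pow_nonneg hlam0 n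
      nlinarith
    | succ m ih =>
      intro n
      have h1 := hstep n
      have h2 : p (u (n+1)) (u (n + 1 + m + 1)) ≤ lam ^ (n+1) * C := ih (n+1)
      have h3 := hw1 (u n) (u (n+1)) (u (n + m + 1 + 1))
      have he : n + 1 + m + 1 = n + m + 1 + 1 := by ring
      rw [he] at h2
      have hln : (0:ℝ) ≤ lam ^ n := pow_nonneg hlam0 n
      have hCeq : P + lam * C = C := by
        have hCm : C * (1 - lam) = P := div_mul_cancel₀ P h1lam.ne'
        linarith
      calc p (u n) (u (n + m + 1 + 1)) ≤ p (u n) (u (n+1)) + p (u (n+1)) (u (n+m+1+1)) := h3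
        _ ≤ lam ^ n * P + lam ^ (n+1) * C := add_le_add h1 h2
        _ = lam ^ n * (P + lam * C) := by ring
        _ = lam ^ n * C := by rw [hCeq]
  have hlt : ∀ n m, n < m → p (u n) (u m) ≤ lam ^ n * C := by
    intro n m hnm
    obtain ⟨k, rfl⟩ := Nat.exists_eq_add_of_lt hnm
    exact hgeo k n
  have hpow0 : Filter.Tendsto (fun n => lam ^ n * C) Filter.atTop (nhds 0) := by
    simpa using (tendsto_pow_atTop_nhds_zero_of_lt_one hlam0 hlam1).mul_const C
  -- Cauchy
  have hcauchy : CauchySeq u := by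
    rw [Metric.cauchySeq_iff']
    intro ε hε
    obtain ⟨δ, hδ, hδ'⟩ := hw3 (ε/2) (by linarith)
    obtain ⟨N, hN⟩ := (Filter.tendsto_atTop'.mp hpow0) (Set.Iio δ) (Iio_mem_nhds hδ)
    refine ⟨N + 1, fun n hn => ?_⟩
    have h1 : p (u N) (u n) ≤ δ := le_of_lt (lt_of_le_of_lt (hlt N n hn) (hN N le_rfl))
    have h2 : p (u N) (u (N+1)) ≤ δ := le_of_lt (lt_of_le_of_lt (hlt N (N+1) (Nat.lt_succ_self N)) (hN N le_rfl))
    have := hδ' (u n) (u (N+1)) (u N) h1 h2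
    calc dist (u n) (u (N+1)) ≤ ε/2 := this
      _ < ε := by linarith
  obtain ⟨x, hx⟩ := cauchySeq_tendsto_of_complete hcauchy
  obtain ⟨φ, hφmono, hφR⟩ := hdsc u x hR hx
  -- p (u k) x ≤ lam^k * C for all k
  have hpx : ∀ k, p (u k) x ≤ lam ^ k * C := by
    intro k
    refine le_trans (hw2 (u k) u x hR hx) ?_
    refine Filter.liminf_le_of_frequently_le ?_ ?_
    · exact (Filter.eventually_atTop.mpr
        ⟨k + 1, fun n hn => hlt k n (Nat.lt_of_succ_le hn)⟩).frequently
    · exact Filter.isBoundedUnder_of ⟨0, fun n => hp0 _ _⟩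
  -- fixed point
  have hdist : ∀ ε > (0:ℝ), dist (T x) x ≤ ε := by
    intro ε hε
    obtain ⟨δ, hδ, hδ'⟩ := hw3 ε hε
    obtain ⟨N, hN⟩ := (Filter.tendsto_atTop'.mp hpow0) (Set.Iio (δ/2)) (Iio_mem_nhds (by linarith))
    set k := φ N with hk
    have hkN : N ≤ k := hφmono.id_le N
    have hlamle : lam ^ k * C ≤ lam ^ N * C := by
      have := pow_le_pow_of_le_one hlam0 hlam1.le hkN
      nlinarith
    have hsmall : lam ^ k * C < δ/2 := lt_of_le_of_lt hlamle (hN N le_rfl)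
    have h1 : p (u k) x ≤ δ := by
      have := hpx k; linarith
    have h2 : p (u k) (T x) ≤ δ := by
      have ha : p (u (k+1)) (T x) ≤ lam * p (u k) x := by
        rw [husucc k]; exact hcontr _ _ (hφR N)
      have hb := hw1 (u k) (u (k+1)) (T x)
      have hc := hstep k
      have hd : p (u k) x ≤ lam ^ k * C := hpx k
      have hln : (0:ℝ) ≤ lam ^ k := pow_nonneg hlam0 k
      nlinarith
    exact hδ' (T x) x (u k) h2 h1
  refine ⟨x, ?_⟩
  have : dist (T x) x ≤ 0 := le_of_forall_gt_imp_ge_of_dense (by intro ε hε; exact hdist ε hε)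
  exact eq_of_dist_eq_zero (le_antisymm this dist_nonneg)
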